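/- For θ ∈ (0, π/4] (i.e., with 2θ ∈ (0, π/2)) and φ ∈ [0, π/2 − θ), setting t = tan θ and u = tan φ, one has (tan 2θ / 2)·(1/tan θ − tan(θ − φ)) = 1 + (1 − 1/(1 + t u))·(1/cos 2θ), and this quantity is strictly less than 1 + 1/(2 cos 2θ). -/

import Mathlib

open Real

theorem stmt_19 (θ φ : ℝ) (hθ0 : 0 < θ) (hθ : θ < π / 4)
    (hφ0 : 0 ≤ φ) (hφ : φ < π / 2 - θ)
    (t u : ℝ) (ht : t = tan θ) (hu : u = tan φ) :
    (tan (2 * θ) / 2) * (1 / tan θ - tan (θ - φ)) =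
      1 + (1 - 1 / (1 + t * u)) * (1 / cos (2 * θ)) ∧
    (tan (2 * θ) / 2) * (1 / tan θ - tan (θ - φ)) < 1 + 1 / (2 * cos (2 * θ)) := by
  have hπ := pi_pos
  have hθ2 : θ < π / 2 := by linarith
  have hcθ : 0 < cos θ := cos_pos_of_mem_Ioo ⟨by linarith, hθ2⟩
  have hφ2 : φ < π / 2 := by linarith
  have hcφ : 0 < cos φ := cos_pos_of_mem_Ioo ⟨by linarith, hφ2⟩
  have ht0 : 0 < t := ht ▸ tan_pos_of_pos_of_lt_pi_div_two hθ0 hθ2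
  have ht1 : t < 1 := by
    rw [ht, ← tan_pi_div_four]
    exact tan_lt_tan_of_nonneg_of_lt_pi_div_two hθ0.le (by linarith) hθ
  have hu0 : 0 ≤ u := hu ▸ tan_nonneg_of_nonneg_of_le_pi_div_two hφ0 hφ2.le
  have hut : u < 1 / t := by
    rw [hu, ht, one_div, ← tan_pi_div_two_sub]
    exact tan_lt_tan_of_nonneg_of_lt_pi_div_two hφ0 (by linarith) hφ
  have htu : t * u < 1 := by
    have := (mul_lt_mul_of_pos_left hut ht0)
    rwa [mul_one_div, div_self ht0.ne'] at this
  have h1tu : 0 < 1 + t * u := by positivity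
  have h1t2 : 0 < 1 - t ^ 2 := by nlinarith
  have hc2 : 0 < cos (2 * θ) := cos_pos_of_mem_Ioo ⟨by linarith, by linarith⟩
  have hcm : 0 < cos (θ - φ) := cos_pos_of_mem_Ioo ⟨by linarith, by linarith⟩
  have hne : cos θ * cos φ + sin θ * sin φ ≠ 0 := by
    rw [← cos_sub]; exact hcm.ne'
  have htan_sub : tan (θ - φ) = (t - u) / (1 + t * u) := by
    rw [tan_eq_sin_div_cos, sin_sub, cos_sub, ht, hu, tan_eq_sin_div_cos, tan_eq_sin_div_cos]
    field_simp
  have hs1 : sin θ ^ 2 + cos θ ^ 2 = 1 := sin_sq_add_cos_sq θ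
  have hcos2 : cos (2 * θ) * (1 + t ^ 2) = 1 - t ^ 2 := by
    rw [cos_two_mul', ht, tan_eq_sin_div_cos]
    field_simp
    linear_combination (cos θ ^ 2 - sin θ ^ 2) * hs1
  have hcos2' : 1 / cos (2 * θ) = (1 + t ^ 2) / (1 - t ^ 2) := by
    rw [eq_div_iff h1t2.ne', one_div, inv_mul_eq_div, div_eq_iff hc2.ne']
    linarith [hcos2]
  have heq : (tan (2 * θ) / 2) * (1 / tan θ - tan (θ - φ)) =
      1 + (1 - 1 / (1 + t * u)) * (1 / cos (2 * θ)) := by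
    rw [tan_two_mul, htan_sub, hcos2', ← ht]
    field_simp
    ring
  refine ⟨heq, ?_⟩
  rw [heq]
  have h2 : 1 - 1 / (1 + t * u) < 1 / 2 := by
    have : (1:ℝ) / 2 < 1 / (1 + t * u) := by
      rw [div_lt_div_iff₀ (by norm_num) h1tu]; linarith
    linarith
  have hinv : 0 < 1 / cos (2 * θ) := by positivity
  have := mul_lt_mul_of_pos_right h2 hinv
  have hrw : 1 / 2 * (1 / cos (2 * θ)) = 1 / (2 * cos (2 * θ)) := by ring
  linarith [this, hrw.le]
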